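/- arXiv:math/0309059 — 2 statements merged into one kernel-verified Lean document; each statement's English description precedes it below -/
import Mathlib

section
/- Let A be a C*-algebra, X a (right) Hilbert A-module and φ : A → B(X) a left action. Then the restriction of φ to J_X = φ⁻¹(K(X)) ∩ (ker φ)^⊥ is an injection of J_X into K(X); moreover J_X is the maximal such ideal: if J is any closed two-sided ideal of A with φ(J) ⊆ K(X) and φ restricted to J injective, then J ⊆ J_X. -/
open scoped RightActions

/-- The December 2024 Mathlib `CStarModule` (right Hilbert module, `SMul Aᵐᵒᵖ E`), whose name
Mathlib now uses for left Hilbert modules. -/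
class RightCStarModule (A E : Type*) [NonUnitalSemiring A] [StarRing A] [Module ℂ A]
    [AddCommGroup E] [Module ℂ E] [PartialOrder A] [SMul Aᵐᵒᵖ E] [Norm A] [Norm E]
    extends Inner A E where
  inner_add_right {x} {y} {z} : inner x (y + z) = inner x y + inner x z
  inner_self_nonneg {x} : 0 ≤ inner x x
  inner_self {x} : inner x x = 0 ↔ x = 0
  inner_op_smul_right {a : A} {x y : E} : inner x (y <• a) = inner x y * a
  inner_smul_right_complex {z : ℂ} {x} {y} : inner x (z • y) = z • inner x y
  star_inner x y : star (inner x y) = inner y x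
  norm_eq_sqrt_norm_inner_self x : ‖x‖ = √‖inner x x‖

variable {A X : Type*} [NonUnitalCStarAlgebra A] [PartialOrder A] [StarOrderedRing A]
  [NormedAddCommGroup X] [NormedSpace ℂ X] [SMul Aᵐᵒᵖ X] [RightCStarModule A X] [CompleteSpace X]

/-- `K(X)`: the closed linear span in `B(X)` of the rank-one operators
`θ_{ξ,η} : ζ ↦ ξ • ⟪η, ζ⟫`. -/
def compactOps (A X : Type*) [NonUnitalCStarAlgebra A] [PartialOrder A] [StarOrderedRing A]
    [NormedAddCommGroup X] [NormedSpace ℂ X] [SMul Aᵐᵒᵖ X] [RightCStarModule A X]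
    [CompleteSpace X] : Set (X →L[ℂ] X) :=
  closure (Submodule.span ℂ
    {T : X →L[ℂ] X | ∃ ξ η : X, ∀ ζ : X, T ζ = ξ <• (inner A η ζ : A)} : Set (X →L[ℂ] X))

/-- The ideal `J_X = φ⁻¹(K(X)) ∩ (ker φ)^⊥` of Katsura, as a subset of `A`. -/
def KatsuraIdeal (φ : A →ₙₐ[ℂ] (X →L[ℂ] X)) : Set A :=
  {a : A | φ a ∈ compactOps A X} ∩ {a : A | ∀ b : A, φ b = 0 → a * b = 0}

/-- For a left action `φ` of `A` on a Hilbert `A`-module `X`, the restriction of `φ` to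
`J_X = φ⁻¹(K(X)) ∩ (ker φ)^⊥` is an injection of `J_X` into `K(X)`, and `J_X` is maximal
with this property: any closed two-sided ideal `J` with `φ(J) ⊆ K(X)` and `φ` injective on
`J` satisfies `J ⊆ J_X`. -/
theorem katsuraIdeal_injOn_and_maximal (φ : A →ₙₐ[ℂ] (X →L[ℂ] X))
    (hmod : ∀ (a : A) (ξ : X) (b : A), φ a (ξ <• b) = (φ a ξ) <• b)
    (hadj : ∀ (a : A) (ξ η : X), (inner A (φ a ξ) η : A) = inner A ξ (φ (star a) η)) :
    Set.InjOn φ (KatsuraIdeal φ) ∧ (∀ a ∈ KatsuraIdeal φ, φ a ∈ compactOps A X) ∧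
      ∀ J : TwoSidedIdeal A, IsClosed (J : Set A) →
        (∀ a ∈ J, φ a ∈ compactOps A X) → Set.InjOn φ (J : Set A) →
        (J : Set A) ⊆ KatsuraIdeal φ := by
  have key : ∀ c : A, φ c = 0 → φ (star c) = 0 := by
    intro c hc
    ext η
    have h := hadj (star c) η (φ (star c) η)
    rw [star_star, hc] at h
    have hz0 : (inner A η (0 : X) : A) = 0 := by
      have h0 := RightCStarModule.inner_add_right (A := A) (x := η) (y := (0 : X)) (z := 0)
      rw [add_zero] at h0
      simpa using h0
    simp only [ContinuousLinearMap.zero_apply, hz0] at h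
    simpa using RightCStarModule.inner_self.mp h
  refine ⟨?_, fun a ha => ha.1, fun J _ hJc hJinj a ha => ⟨hJc a ha, fun b hb => ?_⟩⟩
  · intro a ha b hb hab
    have hc : φ (a - b) = 0 := by rw [map_sub, hab, sub_self]
    have h1 : a * star (a - b) = 0 := ha.2 _ (key _ hc)
    have h2 : b * star (a - b) = 0 := hb.2 _ (key _ hc)
    have h3 : (a - b) * star (a - b) = 0 := by rw [sub_mul, h1, h2, sub_self]
    have hn : ‖a - b‖ * ‖a - b‖ = 0 := by
      rw [← CStarRing.norm_self_mul_star, h3, norm_zero]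
    have hz : a - b = 0 := norm_eq_zero.mp (mul_self_eq_zero.mp hn)
    exact sub_eq_zero.mp hz
  · have hmem : a * b ∈ J := J.mul_mem_right a b ha
    have : φ (a * b) = φ 0 := by rw [map_mul, hb, mul_zero, map_zero]
    simpa using hJinj hmem J.zero_mem this
end

section
/- Let (X, φ, ⟨⟨·,·⟩⟩) be a Hilbert A-bimodule over a C*-algebra A. Then φ is injective if and only if the ideal I_X is essential in A, i.e. I_X^⊥ = {0}, where I_X is the closed linear span of {⟨⟨ξ,η⟩⟩ : ξ,η ∈ X} and I_X^⊥ = {a ∈ A : ab = 0 for all b ∈ I_X}. -/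
open scoped RightActions

/-- The definition of `CStarModule` as it stood in Mathlib (December 2024): a Hilbert C⋆-module
over `A` with a *right* action of `A` (via `Aᵐᵒᵖ`) and inner product `A`-linear on the right. -/
class CStarModuleOld (A E : Type*) [NonUnitalSemiring A] [StarRing A] [Module ℂ A]
    [AddCommGroup E] [Module ℂ E] [PartialOrder A] [SMul Aᵐᵒᵖ E] [Norm A] [Norm E]
    extends Inner A E where
  inner_add_right {x} {y} {z} : inner x (y + z) = inner x y + inner x z
  inner_self_nonneg {x} : 0 ≤ inner x x
  inner_self {x} : inner x x = 0 ↔ x = 0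
  inner_op_smul_right {a : A} {x y : E} : inner x (y <• a) = inner x y * a
  inner_smul_right_complex {z : ℂ} {x} {y} : inner x (z • y) = z • inner x y
  star_inner x y : star (inner x y) = inner y x
  norm_eq_sqrt_norm_inner_self x : ‖x‖ = √‖inner x x‖

variable {A X : Type*} [NonUnitalCStarAlgebra A] [PartialOrder A] [StarOrderedRing A]
  [NormedAddCommGroup X] [NormedSpace ℂ X] [SMul Aᵐᵒᵖ X] [CStarModuleOld A X] [CompleteSpace X]

theorem CStarModuleOld.inner_op_smul_left {a : A} {x y : X} :
    inner A (x <• a) y = star a * inner A x y := by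
  rw [← CStarModuleOld.star_inner y (x <• a), CStarModuleOld.inner_op_smul_right, star_mul,
    CStarModuleOld.star_inner]

theorem CStarModuleOld.inner_zero_left {y : X} : inner A (0 : X) y = 0 := by
  rw [← CStarModuleOld.star_inner y 0]
  have : inner A y (0 : X) = 0 := by
    have h := CStarModuleOld.inner_smul_right_complex (A := A) (z := (0 : ℂ)) (x := y) (y := (0 : X))
    simpa using h
  rw [this, star_zero]

/-- Let `(X, φ, L)` be a Hilbert `A`-bimodule (here `L ξ η = ⟨⟨ξ, η⟩⟩` is the left inner
product).  Then `φ` is injective if and only if the ideal `I_X` (the closed linear span of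
`{⟨⟨ξ, η⟩⟩ : ξ, η ∈ X}`) is essential in `A`, i.e. `I_X^⊥ = {0}`. -/
theorem bimodule_phi_injective_iff_IX_essential (φ : A →ₙₐ[ℂ] (X →L[ℂ] X))
    (hmod : ∀ (a : A) (ξ : X) (b : A), φ a (ξ <• b) = (φ a ξ) <• b)
    (L : X → X → A)
    (hadd : ∀ ξ₁ ξ₂ η : X, L (ξ₁ + ξ₂) η = L ξ₁ η + L ξ₂ η)
    (hsmul : ∀ (c : ℂ) (ξ η : X), L (c • ξ) η = c • L ξ η)
    (h1 : ∀ (a : A) (ξ η : X), L (φ a ξ) η = a * L ξ η)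
    (h2 : ∀ ξ η : X, L ξ η = star (L η ξ))
    (h3 : ∀ ξ : X, 0 ≤ L ξ ξ)
    (h4 : ∀ ξ η ζ : X, φ (L ξ η) ζ = ξ <• (inner A η ζ : A)) :
    Function.Injective φ ↔
      {a : A | ∀ b ∈ closure
          (Submodule.span ℂ {x : A | ∃ ξ η : X, x = L ξ η} : Set A), a * b = 0}
        = {0} := by
  constructor
  · intro hinj
    ext a
    simp only [Set.mem_setOf_eq, Set.mem_singleton_iff]
    constructor
    · intro ha
      -- a annihilates all generators
      have hL : ∀ ξ η : X, a * L ξ η = 0 := fun ξ η =>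
        ha _ (subset_closure (Submodule.subset_span ⟨ξ, η, rfl⟩))
      have hz : ∀ ξ : X, φ a ξ = 0 := by
        intro ξ
        set ζ := φ a ξ with hζ
        have hLζ : L ζ ζ = 0 := by rw [hζ, h1, hL]
        have h0 : ζ <• (inner A ζ ζ : A) = 0 := by
          rw [← h4, hLζ, map_zero]; rfl
        have hmul : star (inner A ζ ζ : A) * inner A ζ ζ = 0 := by
          rw [← CStarModuleOld.inner_op_smul_left, h0, CStarModuleOld.inner_zero_left]
        have hnorm : ‖(inner A ζ ζ : A)‖ * ‖(inner A ζ ζ : A)‖ = 0 := by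
          rw [← CStarRing.norm_star_mul_self, hmul, norm_zero]
        have : (inner A ζ ζ : A) = 0 := by
          rcases mul_self_eq_zero.mp hnorm with h
          exact norm_eq_zero.mp h
        exact CStarModuleOld.inner_self.mp this
      have hφ : φ a = 0 := by ext ξ; simpa using hz ξ
      have : φ a = φ 0 := by rw [hφ, map_zero]
      exact hinj this
    · rintro rfl
      intro b _
      rw [zero_mul]
  · intro hess
    rw [injective_iff_map_eq_zero]
    intro a ha
    have hmem : a ∈ ({a : A | ∀ b ∈ closure
        (Submodule.span ℂ {x : A | ∃ ξ η : X, x = L ξ η} : Set A), a * b = 0}) := by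
      intro b hb
      have hgen : ∀ x ∈ (Submodule.span ℂ {x : A | ∃ ξ η : X, x = L ξ η} : Set A),
          a * x = 0 := by
        intro x hx
        have hx' : x ∈ LinearMap.ker (LinearMap.mulLeft ℂ a) := by
          refine Submodule.span_le.mpr ?_ hx
          rintro y ⟨ξ, η, rfl⟩
          simp only [SetLike.mem_coe, LinearMap.mem_ker, LinearMap.mulLeft_apply]
          rw [← h1, ha]
          have : (0 : X →L[ℂ] X) ξ = 0 := rfl
          rw [this]
          have hL0 : L 0 η = 0 := by
            have := hadd 0 0 η
            simpa using this.symm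
          exact hL0
        simpa using hx'
      have hc : a * b ∈ closure ({0} : Set A) := by
        refine map_mem_closure (by fun_prop) hb ?_
        intro x hx
        simp [hgen x hx]
      simpa using hc
    rw [hess] at hmem
    exact hmem
end
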